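/- Let d ≥ 1 and let A be a d×d real symmetric matrix. Define, for x ∈ ℝᵈ \ {0}, K(x) = (1/|x|^{d+2})·[−d·(Tr A)² − 2d·Tr(A²)] + (xᵀAx·Tr A/|x|^{d+4})·2d(d+2) + (xᵀA²x/|x|^{d+4})·4d(d+2) − ((xᵀAx)²/|x|^{d+6})·d(d+2)(d+4). If A is not a scalar multiple of the identity, then the function x ↦ |x|^{d+6}·K(x) is a nonzero polynomial on ℝᵈ \ {0}. -/

import Mathlib

open Matrix Finset

noncomputable def fluctKernel {d : ℕ} (A : Matrix (Fin d) (Fin d) ℝ)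
    (x : EuclideanSpace ℝ (Fin d)) : ℝ :=
  let q : ℝ := ∑ i, ∑ j, A i j * x i * x j
  let q2 : ℝ := ∑ i, ∑ j, (A * A) i j * x i * x j
  (1 / ‖x‖ ^ (d + 2)) * (-(d : ℝ) * (A.trace) ^ 2 - 2 * d * (A * A).trace)
    + (q * A.trace / ‖x‖ ^ (d + 4)) * (2 * d * (d + 2))
    + (q2 / ‖x‖ ^ (d + 4)) * (4 * d * (d + 2))
    - ((q ^ 2) / ‖x‖ ^ (d + 6)) * (d * (d + 2) * (d + 4))

namespace FluctAux

variable {d : ℕ}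

noncomputable def quadP (M : Matrix (Fin d) (Fin d) ℝ) : MvPolynomial (Fin d) ℝ :=
  ∑ i, ∑ j, MvPolynomial.C (M i j) * MvPolynomial.X i * MvPolynomial.X j

noncomputable def normP (d : ℕ) : MvPolynomial (Fin d) ℝ :=
  ∑ i, MvPolynomial.X i * MvPolynomial.X i

lemma eval_quadP (M : Matrix (Fin d) (Fin d) ℝ) (y : Fin d → ℝ) :
    MvPolynomial.eval y (quadP M) = ∑ i, ∑ j, M i j * y i * y j := by
  simp [quadP]

lemma eval_normP (y : Fin d → ℝ) :
    MvPolynomial.eval y (normP d) = ∑ i, y i * y i := by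
  simp [normP]

lemma quad_eq_dot (M : Matrix (Fin d) (Fin d) ℝ) (y : Fin d → ℝ) :
    (∑ i, ∑ j, M i j * y i * y j) = y ⬝ᵥ (M *ᵥ y) := by
  simp only [dotProduct, mulVec, Finset.mul_sum]
  exact Finset.sum_congr rfl fun i _ => Finset.sum_congr rfl fun j _ => by ring

lemma dot_expand (u v : Fin d → ℝ) (a b t : ℝ) (huu : u ⬝ᵥ u = 1) (hvv : v ⬝ᵥ v = 1)
    (huv : u ⬝ᵥ v = 0) (hvu : v ⬝ᵥ u = 0) :
    (u + t • v) ⬝ᵥ (a • u + (t * b) • v) = a + b * t ^ 2 := by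
  simp only [add_dotProduct, dotProduct_add, dotProduct_smul, smul_dotProduct, smul_eq_mul,
    huu, hvv, huv, hvu]
  ring

lemma quad_eig (M : Matrix (Fin d) (Fin d) ℝ) (u v : Fin d → ℝ) (a b t : ℝ)
    (hu : M *ᵥ u = a • u) (hv : M *ᵥ v = b • v)
    (huu : u ⬝ᵥ u = 1) (hvv : v ⬝ᵥ v = 1) (huv : u ⬝ᵥ v = 0) (hvu : v ⬝ᵥ u = 0) :
    (∑ i, ∑ j, M i j * (u + t • v) i * (u + t • v) j) = a + b * t ^ 2 := by
  rw [quad_eq_dot, mulVec_add, mulVec_smul, hu, hv, smul_smul]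
  exact dot_expand u v a b t huu hvv huv hvu

lemma contra_key {d' T Cc lam mu : ℝ}
    (hpos : 0 < d' * (d' + 2) * (d' + 4))
    (h : ∀ t : ℝ,
      Cc * (1 + t ^ 2) ^ 2
        + (1 + t ^ 2) * ((2 * d' * (d' + 2) * T) * (lam + mu * t ^ 2)
            + (4 * d' * (d' + 2)) * (lam * lam + mu * mu * t ^ 2))
        - (d' * (d' + 2) * (d' + 4)) * (lam + mu * t ^ 2) ^ 2 = 0) :
    lam = mu := by
  have h0 := h 0
  have h1 := h 1
  have h2 := h 2
  have key : (d' * (d' + 2) * (d' + 4)) * (lam - mu) ^ 2 = 0 := by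
    linear_combination (-(5 : ℝ)/2) * h0 + ((5 : ℝ)/3) * h1 + (-(1 : ℝ)/6) * h2
  have := mul_eq_zero.mp key
  rcases this with h' | h'
  · exact absurd h' (ne_of_gt hpos)
  · have := sq_eq_zero_iff.mp h'
    linarith

end FluctAux

open FluctAux

theorem stmt_4 {d : ℕ} (hd : 1 ≤ d) (A : Matrix (Fin d) (Fin d) ℝ)
    (hAsymm : A.IsSymm) (hApos : A.PosDef)
    (hnotscalar : ¬ ∃ c : ℝ, A = c • (1 : Matrix (Fin d) (Fin d) ℝ)) :
    ∃ P : MvPolynomial (Fin d) ℝ, P ≠ 0 ∧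
      ∀ x : EuclideanSpace ℝ (Fin d), x ≠ 0 →
        ‖x‖ ^ (d + 6) * fluctKernel A x = MvPolynomial.eval (fun i => x i) P := by
  set T : ℝ := A.trace with hT
  set Cc : ℝ := -(d : ℝ) * T ^ 2 - 2 * d * (A * A).trace with hCc
  set P : MvPolynomial (Fin d) ℝ :=
    MvPolynomial.C Cc * (normP d) ^ 2
      + normP d * (MvPolynomial.C (2 * (d : ℝ) * (d + 2) * T) * quadP A
          + MvPolynomial.C (4 * (d : ℝ) * (d + 2)) * quadP (A * A))
      - MvPolynomial.C ((d : ℝ) * (d + 2) * (d + 4)) * (quadP A) ^ 2 with hP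
  have evalP : ∀ y : Fin d → ℝ,
      MvPolynomial.eval y P =
        Cc * (∑ i, y i * y i) ^ 2
          + (∑ i, y i * y i) * ((2 * (d : ℝ) * (d + 2) * T) * (∑ i, ∑ j, A i j * y i * y j)
              + (4 * (d : ℝ) * (d + 2)) * (∑ i, ∑ j, (A * A) i j * y i * y j))
          - ((d : ℝ) * (d + 2) * (d + 4)) * (∑ i, ∑ j, A i j * y i * y j) ^ 2 := by
    intro y
    simp [hP, eval_quadP, eval_normP]
  refine ⟨P, ?_, ?_⟩
  · -- P ≠ 0
    intro hP0
    have hA : A.IsHermitian := hApos.isHermitian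
    -- all eigenvalues equal ⟹ scalar
    have hex : ∃ i j : Fin d, hA.eigenvalues i ≠ hA.eigenvalues j := by
      by_contra hcon
      push_neg at hcon
      apply hnotscalar
      have i0 : Fin d := ⟨0, hd⟩
      refine ⟨hA.eigenvalues i0, ?_⟩
      have hdiag : Matrix.diagonal (RCLike.ofReal ∘ hA.eigenvalues) =
          (hA.eigenvalues i0) • (1 : Matrix (Fin d) (Fin d) ℝ) := by
        ext a b
        by_cases hab : a = b
        · subst hab
          simp [Matrix.diagonal, hcon a i0]
        · simp [Matrix.diagonal, hab]
      calc A = (hA.eigenvectorUnitary : Matrix (Fin d) (Fin d) ℝ)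
              * Matrix.diagonal (RCLike.ofReal ∘ hA.eigenvalues)
              * (star (hA.eigenvectorUnitary : Matrix (Fin d) (Fin d) ℝ)) := hA.spectral_theorem
        _ = hA.eigenvalues i0 • (1 : Matrix (Fin d) (Fin d) ℝ) := by
            rw [hdiag, Matrix.mul_smul, Matrix.smul_mul, mul_one,
              Matrix.mem_unitaryGroup_iff.mp hA.eigenvectorUnitary.2]
    obtain ⟨i, j, hij⟩ := hex
    set u : Fin d → ℝ := ⇑(hA.eigenvectorBasis i) with hu
    set v : Fin d → ℝ := ⇑(hA.eigenvectorBasis j) with hv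
    set lam : ℝ := hA.eigenvalues i with hlam
    set mu : ℝ := hA.eigenvalues j with hmu
    have hon := hA.eigenvectorBasis.orthonormal
    rw [orthonormal_iff_ite] at hon
    have hdot : ∀ a b : Fin d,
        (⇑(hA.eigenvectorBasis a) : Fin d → ℝ) ⬝ᵥ ⇑(hA.eigenvectorBasis b)
          = if a = b then 1 else 0 := by
      intro a b
      have := hon a b
      rw [PiLp.inner_apply] at this
      simpa [dotProduct, mul_comm] using this
    have huu : u ⬝ᵥ u = 1 := by simpa using hdot i i
    have hvv : v ⬝ᵥ v = 1 := by simpa using hdot j j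
    have hijn : i ≠ j := fun h => hij (by rw [hlam, hmu, h])
    have huv : u ⬝ᵥ v = 0 := by simpa [hijn] using hdot i j
    have hvu : v ⬝ᵥ u = 0 := by simpa [hijn.symm] using hdot j i
    have hmu1 : A *ᵥ u = lam • u := hA.mulVec_eigenvectorBasis i
    have hmv1 : A *ᵥ v = mu • v := hA.mulVec_eigenvectorBasis j
    have hmu2 : (A * A) *ᵥ u = (lam * lam) • u := by
      rw [← Matrix.mulVec_mulVec, hmu1, Matrix.mulVec_smul, hmu1, smul_smul]
    have hmv2 : (A * A) *ᵥ v = (mu * mu) • v := by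
      rw [← Matrix.mulVec_mulVec, hmv1, Matrix.mulVec_smul, hmv1, smul_smul]
    have hpos : (0 : ℝ) < (d : ℝ) * (d + 2) * (d + 4) := by
      have : (1 : ℝ) ≤ (d : ℝ) := by exact_mod_cast hd
      positivity
    apply hij
    apply contra_key hpos
    intro t
    have h0 := evalP (u + t • v)
    rw [hP0] at h0
    simp only [map_zero] at h0
    have hN : (∑ k, (u + t • v) k * (u + t • v) k) = 1 + t ^ 2 := by
      have h := dot_expand u v 1 1 t huu hvv huv hvu
      simp only [one_smul, mul_one] at h
      rw [show (∑ k, (u + t • v) k * (u + t • v) k) = (u + t • v) ⬝ᵥ (u + t • v) from rfl, h]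
      ring
    have hQ := quad_eig A u v lam mu t hmu1 hmv1 huu hvv huv hvu
    have hQ2 := quad_eig (A * A) u v (lam * lam) (mu * mu) t hmu2 hmv2 huu hvv huv hvu
    rw [hN, hQ, hQ2] at h0
    exact h0.symm
  · -- evaluation identity
    intro x hx
    have hxn : ‖x‖ ≠ 0 := by simpa using hx
    have hn2 : ‖x‖ ^ 2 = ∑ k, x k * x k := by
      rw [EuclideanSpace.norm_eq]
      rw [Real.sq_sqrt (by positivity)]
      exact Finset.sum_congr rfl fun k _ => by simp [sq, Real.norm_eq_abs, abs_mul_abs_self]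
    rw [evalP, ← hn2]
    unfold fluctKernel
    simp only []
    set q : ℝ := ∑ i, ∑ j, A i j * x i * x j
    set q2 : ℝ := ∑ i, ∑ j, (A * A) i j * x i * x j
    have hp2 : ‖x‖ ^ (d + 2) ≠ 0 := pow_ne_zero _ hxn
    have hp4 : ‖x‖ ^ (d + 4) ≠ 0 := pow_ne_zero _ hxn
    have hp6 : ‖x‖ ^ (d + 6) ≠ 0 := pow_ne_zero _ hxn
    field_simp
    ring
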